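/- Let A be positive semidefinite and T an operator admitting an A-adjoint. Then dw_A(T)² ≤ ‖ |T|_A² + (|T|_A²)^♯ |T|_A² ‖_A, where |T|_A² = T^♯T and S^♯ denotes the A-adjoint of S. -/

import Mathlib

noncomputable section

namespace DW

variable {H : Type*} [NormedAddCommGroup H] [InnerProductSpace ℂ H]

/-- The semi-inner product induced by `A`: `⟨x,y⟩_A = ⟨Ax, y⟩`. -/
def innA (A : H →L[ℂ] H) (x y : H) : ℂ := inner ℂ (A x) y

/-- The seminorm induced by `A`. -/
def normA (A : H →L[ℂ] H) (x : H) : ℝ := Real.sqrt (innA A x x).re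

/-- `T` is `A`-bounded. -/
def IsABounded (A T : H →L[ℂ] H) : Prop := ∃ c > 0, ∀ x, normA A (T x) ≤ c * normA A x

/-- `S` is an `A`-adjoint of `T`. -/
def IsAAdjointPair (A T S : H →L[ℂ] H) : Prop := ∀ x y, innA A (T x) y = innA A x (S y)

/-- The `A`-operator seminorm. -/
def opNormA (A T : H →L[ℂ] H) : ℝ := sSup {r | ∃ x, normA A x = 1 ∧ r = normA A (T x)}

/-- The `A`-minimum modulus. -/
def mA (A T : H →L[ℂ] H) : ℝ := sInf {r | ∃ x, normA A x = 1 ∧ r = normA A (T x)}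

/-- The `A`-numerical radius. -/
def wA (A T : H →L[ℂ] H) : ℝ :=
  sSup {r | ∃ x, normA A x = 1 ∧ r = ‖innA A (T x) x‖}

/-- The `A`-Crawford number. -/
def cA (A T : H →L[ℂ] H) : ℝ :=
  sInf {r | ∃ x, normA A x = 1 ∧ r = ‖innA A (T x) x‖}

/-- The `A`-Davis-Wielandt radius. -/
def dwA (A T : H →L[ℂ] H) : ℝ :=
  sSup {r | ∃ x, normA A x = 1 ∧
    r = Real.sqrt (‖innA A (T x) x‖ ^ 2 + normA A (T x) ^ 4)}

/-- The semi-inner product on `H ⊕ H` induced by `𝔸 = diag(A,A)`. -/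
def innA2 (A : H →L[ℂ] H) (z w : H × H) : ℂ := innA A z.1 w.1 + innA A z.2 w.2

/-- The seminorm on `H ⊕ H` induced by `𝔸 = diag(A,A)`. -/
def normA2 (A : H →L[ℂ] H) (z : H × H) : ℝ := Real.sqrt (innA2 A z z).re

/-- The `𝔸`-numerical radius on `H ⊕ H`, `𝔸 = diag(A,A)`. -/
def wA2 (A : H →L[ℂ] H) (T : H × H →L[ℂ] H × H) : ℝ :=
  sSup {r | ∃ z, normA2 A z = 1 ∧ r = ‖innA2 A (T z) z‖}

/-- The `𝔸`-Davis-Wielandt radius on `H ⊕ H`, `𝔸 = diag(A,A)`. -/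
def dwA2 (A : H →L[ℂ] H) (T : H × H →L[ℂ] H × H) : ℝ :=
  sSup {r | ∃ z, normA2 A z = 1 ∧
    r = Real.sqrt (‖innA2 A (T z) z‖ ^ 2 + normA2 A (T z) ^ 4)}

/-- The block operator `[[0, X], [Y, 0]]` on `H ⊕ H`. -/
def offDiag (X Y : H →L[ℂ] H) : H × H →L[ℂ] H × H :=
  (X.comp (ContinuousLinearMap.snd ℂ H H)).prod (Y.comp (ContinuousLinearMap.fst ℂ H H))

end DW

open DW

variable {H : Type*} [NormedAddCommGroup H] [InnerProductSpace ℂ H] [CompleteSpace H]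

section Aux

open scoped InnerProductSpace ComplexConjugate

variable {H : Type*} [NormedAddCommGroup H] [InnerProductSpace ℂ H] [CompleteSpace H]

variable {A B : H →L[ℂ] H}

lemma aux_innA_eq (hB : IsSelfAdjoint B) (hBA : B * B = A) (x y : H) :
    innA A x y = ⟪B x, B y⟫_ℂ := by
  have h1 : A x = B (B x) := by rw [← hBA]; rfl
  rw [innA, h1]
  exact hB.isSymmetric (B x) y

lemma aux_normA_eq (hB : IsSelfAdjoint B) (hBA : B * B = A) (x : H) :
    normA A x = ‖B x‖ := by
  rw [normA, aux_innA_eq hB hBA]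
  have h2 : (⟪B x, B x⟫_ℂ).re = ‖B x‖ ^ 2 := by
    simpa using inner_self_eq_norm_sq (𝕜 := ℂ) (B x)
  rw [h2]
  exact Real.sqrt_sq (norm_nonneg _)

lemma aux_cs (hB : IsSelfAdjoint B) (hBA : B * B = A) (x y : H) :
    ‖innA A x y‖ ≤ normA A x * normA A y := by
  rw [aux_innA_eq hB hBA, aux_normA_eq hB hBA, aux_normA_eq hB hBA]
  exact norm_inner_le_norm _ _

lemma aux_symm (hB : IsSelfAdjoint B) (hBA : B * B = A) (x y : H) :
    innA A x y = conj (innA A y x) := by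
  rw [aux_innA_eq hB hBA, aux_innA_eq hB hBA, inner_conj_symm]

lemma aux_flip (hB : IsSelfAdjoint B) (hBA : B * B = A) {P Q : H →L[ℂ] H}
    (h : IsAAdjointPair A P Q) : IsAAdjointPair A Q P := by
  intro x y
  rw [aux_symm hB hBA (Q x) y, ← h y x, ← aux_symm hB hBA]

lemma aux_self (hB : IsSelfAdjoint B) (hBA : B * B = A) (x : H) :
    innA A x x = ((normA A x ^ 2 : ℝ) : ℂ) := by
  rw [aux_innA_eq hB hBA, aux_normA_eq hB hBA, inner_self_eq_norm_sq_to_K]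
  norm_cast

lemma aux_normA_le (hB : IsSelfAdjoint B) (hBA : B * B = A) (y : H) :
    normA A y ≤ ‖B‖ * ‖y‖ := by
  rw [aux_normA_eq hB hBA]
  exact B.le_opNorm y

lemma aux_move (hB : IsSelfAdjoint B) (hBA : B * B = A) {M : H →L[ℂ] H}
    (hM : IsAAdjointPair A M M) (k : ℕ) (u v : H) :
    innA A ((M ^ k) u) v = innA A u ((M ^ k) v) := by
  induction k generalizing u v with
  | zero => simp
  | succ n ih =>
    have h1 : (M ^ (n + 1)) u = (M ^ n) (M u) := by
      rw [pow_succ]; rfl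
    have h2 : (M ^ (n + 1)) v = M ((M ^ n) v) := by
      rw [pow_succ']; rfl
    rw [h1, h2, ih (M u) v, hM u ((M ^ n) v)]

lemma aux_doubling (hB : IsSelfAdjoint B) (hBA : B * B = A) {M : H →L[ℂ] H}
    (hM : IsAAdjointPair A M M) {x : H} (hx : normA A x = 1) (k : ℕ) :
    normA A ((M ^ k) x) ^ 2 ≤ normA A ((M ^ (2 * k)) x) := by
  have h1 : innA A ((M ^ k) x) ((M ^ k) x) = innA A x ((M ^ (2 * k)) x) := by
    rw [aux_move hB hBA hM k, show (M ^ k) ((M ^ k) x) = (M ^ (2 * k)) x by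
      rw [two_mul, pow_add]; rfl]
  have h2 : (normA A ((M ^ k) x) ^ 2 : ℝ) = (innA A x ((M ^ (2 * k)) x)).re := by
    rw [← h1, aux_self hB hBA, Complex.ofReal_re]
  rw [h2]
  calc (innA A x ((M ^ (2 * k)) x)).re ≤ ‖innA A x ((M ^ (2 * k)) x)‖ :=
        Complex.re_le_norm _
    _ ≤ normA A x * normA A ((M ^ (2 * k)) x) := aux_cs hB hBA _ _
    _ = normA A ((M ^ (2 * k)) x) := by rw [hx, one_mul]

lemma aux_iter (hB : IsSelfAdjoint B) (hBA : B * B = A) {M : H →L[ℂ] H}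
    (hM : IsAAdjointPair A M M) {x : H} (hx : normA A x = 1) (n : ℕ) :
    normA A (M x) ^ (2 ^ n) ≤ normA A ((M ^ (2 ^ n)) x) := by
  induction n with
  | zero => simp
  | succ n ih =>
    have h0 : (0 : ℝ) ≤ normA A (M x) ^ (2 ^ n) := pow_nonneg (Real.sqrt_nonneg _) _
    calc normA A (M x) ^ (2 ^ (n + 1)) = (normA A (M x) ^ (2 ^ n)) ^ 2 := by
          rw [← pow_mul, pow_succ]
      _ ≤ normA A ((M ^ (2 ^ n)) x) ^ 2 := pow_le_pow_left₀ h0 ih 2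
      _ ≤ normA A ((M ^ (2 * 2 ^ n)) x) := aux_doubling hB hBA hM hx _
      _ = normA A ((M ^ (2 ^ (n + 1))) x) := by rw [pow_succ, mul_comm]

lemma aux_real_trick {t m D : ℝ} (ht : 0 ≤ t) (hm : 0 ≤ m)
    (h : ∀ n : ℕ, t ^ (2 ^ n) ≤ m ^ (2 ^ n) * D) : t ≤ m := by
  by_contra hc
  push_neg at hc
  rcases eq_or_lt_of_le hm with h0 | h0
  · have h1 := h 0
    simp only [pow_zero, pow_one] at h1
    rw [← h0, zero_mul] at h1
    rw [← h0] at hc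
    linarith
  · have hr : 1 < t / m := (one_lt_div h0).mpr hc
    have hD : ∀ n : ℕ, (t / m) ^ n ≤ D := by
      intro n
      have h1 : (t / m) ^ (2 ^ n) ≤ D := by
        rw [div_pow, div_le_iff₀ (pow_pos h0 _)]
        calc t ^ 2 ^ n ≤ m ^ 2 ^ n * D := h n
          _ = D * m ^ 2 ^ n := by ring
      have h2 : (t / m) ^ n ≤ (t / m) ^ (2 ^ n) :=
        pow_le_pow_right₀ hr.le (Nat.lt_two_pow_self (n := n)).le
      linarith
    obtain ⟨n, hn⟩ := pow_unbounded_of_one_lt D hr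
    linarith [hD n]

/-- An `A`-selfadjoint operator satisfies `‖M x‖_A ≤ ‖M‖` for `A`-unit `x`. -/
lemma aux_selfadj_bound (hB : IsSelfAdjoint B) (hBA : B * B = A) {M : H →L[ℂ] H}
    (hM : IsAAdjointPair A M M) {x : H} (hx : normA A x = 1) :
    normA A (M x) ≤ ‖M‖ := by
  refine aux_real_trick (D := ‖B‖ * ‖x‖) (Real.sqrt_nonneg _) (norm_nonneg M) fun n => ?_
  calc normA A (M x) ^ (2 ^ n) ≤ normA A ((M ^ (2 ^ n)) x) := aux_iter hB hBA hM hx n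
    _ ≤ ‖B‖ * ‖(M ^ (2 ^ n)) x‖ := aux_normA_le hB hBA _
    _ ≤ ‖B‖ * (‖M ^ (2 ^ n)‖ * ‖x‖) :=
        mul_le_mul_of_nonneg_left ((M ^ (2 ^ n)).le_opNorm x) (norm_nonneg B)
    _ ≤ ‖B‖ * (‖M‖ ^ (2 ^ n) * ‖x‖) := by
        refine mul_le_mul_of_nonneg_left (mul_le_mul_of_nonneg_right ?_ (norm_nonneg x))
          (norm_nonneg B)
        exact norm_pow_le' M (Nat.pos_of_ne_zero (by positivity))
    _ = ‖M‖ ^ (2 ^ n) * (‖B‖ * ‖x‖) := by ring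

/-- Any operator admitting an `A`-adjoint satisfies a uniform bound on `A`-unit vectors. -/
lemma aux_pair_bound (hB : IsSelfAdjoint B) (hBA : B * B = A) {P Q : H →L[ℂ] H}
    (h : IsAAdjointPair A P Q) {x : H} (hx : normA A x = 1) :
    normA A (P x) ≤ Real.sqrt ‖Q * P‖ := by
  have hQP : IsAAdjointPair A (Q * P) (Q * P) := by
    intro u v
    show innA A (Q (P u)) v = innA A u (Q (P v))
    rw [aux_flip hB hBA h (P u) v, h u (P v)]
  have key : normA A (P x) ^ 2 ≤ ‖Q * P‖ := by
    have h1 : (normA A (P x) ^ 2 : ℝ) = (innA A x ((Q * P) x)).re := by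
      rw [show (Q * P) x = Q (P x) from rfl, ← h x (P x), aux_self hB hBA,
        Complex.ofReal_re]
    rw [h1]
    calc (innA A x ((Q * P) x)).re ≤ ‖innA A x ((Q * P) x)‖ := Complex.re_le_norm _
      _ ≤ normA A x * normA A ((Q * P) x) := aux_cs hB hBA _ _
      _ = normA A ((Q * P) x) := by rw [hx, one_mul]
      _ ≤ ‖Q * P‖ := aux_selfadj_bound hB hBA hQP hx
  exact (Real.le_sqrt (Real.sqrt_nonneg _) (norm_nonneg _)).mpr key

end Aux

theorem stmt11 (A T T' S' : H →L[ℂ] H) (hA : A.IsPositive)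
    (hT' : IsAAdjointPair A T T') (hS' : IsAAdjointPair A (T'.comp T) S') :
    dwA A T ^ 2 ≤ opNormA A (T'.comp T + S'.comp (T'.comp T)) := by
  set B : H →L[ℂ] H := CFC.sqrt A with hBdef
  have hApos : (0 : H →L[ℂ] H) ≤ A := (ContinuousLinearMap.nonneg_iff_isPositive A).mpr hA
  have hBA : B * B = A := CFC.sqrt_mul_sqrt_self A hApos
  have hBpos : B.IsPositive :=
    (ContinuousLinearMap.nonneg_iff_isPositive _).mp (CFC.sqrt_nonneg (a := A))
  have hB : IsSelfAdjoint B := hBpos.isSelfAdjoint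
  set R : H →L[ℂ] H := T'.comp T + S'.comp (T'.comp T) with hRdef
  set Q : H →L[ℂ] H := S' + S'.comp (T'.comp T) with hQdef
  -- `R` has `A`-adjoint `Q`
  have hflipS' : IsAAdjointPair A S' (T'.comp T) := aux_flip hB hBA hS'
  have hRQ : IsAAdjointPair A R Q := by
    intro x y
    have h1 : R x = (T'.comp T) x + S' ((T'.comp T) x) := rfl
    have h2 : Q y = S' y + S' ((T'.comp T) y) := rfl
    rw [h1, h2]
    have e1 : innA A ((T'.comp T) x) y = innA A x (S' y) := hS' x y
    have e2 : innA A (S' ((T'.comp T) x)) y = innA A x (S' ((T'.comp T) y)) := by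
      rw [hflipS' ((T'.comp T) x) y, hS' x ((T'.comp T) y)]
    rw [innA, map_add, inner_add_left] at *
    rw [innA, inner_add_right]
    rw [e1, e2]
    rfl
  -- the set defining `opNormA A R` is bounded above
  have hbdd : BddAbove {r | ∃ x, normA A x = 1 ∧ r = normA A (R x)} := by
    refine ⟨Real.sqrt ‖Q * R‖, ?_⟩
    rintro r ⟨x, hx, rfl⟩
    exact aux_pair_bound hB hBA hRQ hx
  have hCnonneg : 0 ≤ opNormA A R := by
    apply Real.sSup_nonneg
    rintro r ⟨x, hx, rfl⟩
    exact Real.sqrt_nonneg _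
  -- pointwise bound
  have hpoint : ∀ x : H, normA A x = 1 →
      ‖innA A (T x) x‖ ^ 2 + normA A (T x) ^ 4 ≤ opNormA A R := by
    intro x hx
    have hTT : innA A x ((T'.comp T) x) = ((normA A (T x) ^ 2 : ℝ) : ℂ) := by
      rw [ContinuousLinearMap.comp_apply, ← hT' x (T x), aux_self hB hBA]
    have hSS : innA A x ((S'.comp (T'.comp T)) x) = ((normA A ((T'.comp T) x) ^ 2 : ℝ) : ℂ) := by
      rw [show (S'.comp (T'.comp T)) x = S' ((T'.comp T) x) from rfl,
        ← hS' x ((T'.comp T) x), aux_self hB hBA]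
    have hb1 : ‖innA A (T x) x‖ ^ 2 ≤ normA A (T x) ^ 2 := by
      have h := aux_cs hB hBA (T x) x
      rw [hx, mul_one] at h
      exact pow_le_pow_left₀ (norm_nonneg _) h 2
    have hb2 : normA A (T x) ^ 4 ≤ normA A ((T'.comp T) x) ^ 2 := by
      have h1 : normA A (T x) ^ 4 = ‖innA A x ((T'.comp T) x)‖ ^ 2 := by
        rw [hTT, Complex.norm_real, Real.norm_eq_abs, abs_of_nonneg (by positivity), ← pow_mul]
      have h2 := aux_cs hB hBA x ((T'.comp T) x)
      rw [hx, one_mul] at h2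
      rw [h1]
      exact pow_le_pow_left₀ (norm_nonneg _) h2 2
    have hre : normA A (T x) ^ 2 + normA A ((T'.comp T) x) ^ 2 = (innA A x (R x)).re := by
      have h1 : R x = (T'.comp T) x + (S'.comp (T'.comp T)) x := rfl
      rw [h1, innA, inner_add_right, ← innA, ← innA, hTT, hSS]
      simp [← Complex.ofReal_pow]
    have hfin : (innA A x (R x)).re ≤ opNormA A R := by
      calc (innA A x (R x)).re ≤ ‖innA A x (R x)‖ := Complex.re_le_norm _
        _ ≤ normA A x * normA A (R x) := aux_cs hB hBA _ _
        _ = normA A (R x) := by rw [hx, one_mul]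
        _ ≤ opNormA A R := le_csSup hbdd ⟨x, hx, rfl⟩
    calc ‖innA A (T x) x‖ ^ 2 + normA A (T x) ^ 4
        ≤ normA A (T x) ^ 2 + normA A ((T'.comp T) x) ^ 2 := add_le_add hb1 hb2
      _ = (innA A x (R x)).re := hre
      _ ≤ opNormA A R := hfin
  -- conclude
  have hdw_le : dwA A T ≤ Real.sqrt (opNormA A R) := by
    apply Real.sSup_le
    · rintro r ⟨x, hx, rfl⟩
      exact Real.sqrt_le_sqrt (hpoint x hx)
    · exact Real.sqrt_nonneg _
  have hdw_nonneg : 0 ≤ dwA A T := by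
    apply Real.sSup_nonneg
    rintro r ⟨x, hx, rfl⟩
    exact Real.sqrt_nonneg _
  calc dwA A T ^ 2 ≤ Real.sqrt (opNormA A R) ^ 2 := pow_le_pow_left₀ hdw_nonneg hdw_le 2
    _ = opNormA A R := Real.sq_sqrt hCnonneg
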